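/- For every n ≥ 3 there exists a finite subset S ⊆ ℂ× with |S| = n such that |δ²S| = f(n); for instance, S = {e^{5^i} : i = 1, …, n} has this property. -/

import Mathlib

open scoped Pointwise

/-- `f(n) = n(n-1)(n-2)(n-3)/4 + n(n-1)(n-2) + 2n(n-1) + 1`. -/
def fBound (n : ℕ) : ℕ :=
  n * (n - 1) * (n - 2) * (n - 3) / 4 + n * (n - 1) * (n - 2) + 2 * (n * (n - 1)) + 1

/-- Base-5 digit uniqueness. -/
lemma digits5 : ∀ (M : ℕ) (p q : ℕ → ℕ), (∀ k, p k ≤ 4) → (∀ k, q k ≤ 4) →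
    (∑ k ∈ Finset.range M, p k * 5 ^ k) = (∑ k ∈ Finset.range M, q k * 5 ^ k) →
    ∀ k < M, p k = q k := by
  intro M
  induction M with
  | zero => intro p q _ _ _ k hk; omega
  | succ M ih =>
    intro p q hp hq hsum k hk
    rw [Finset.sum_range_succ' (fun k => p k * 5 ^ k), Finset.sum_range_succ' (fun k => q k * 5 ^ k)] at hsum
    have h1 : ∑ k ∈ Finset.range M, p (k+1) * 5 ^ (k+1) = 5 * ∑ k ∈ Finset.range M, p (k+1) * 5 ^ k := by
      rw [Finset.mul_sum]; apply Finset.sum_congr rfl; intro i _; ring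
    have h2 : ∑ k ∈ Finset.range M, q (k+1) * 5 ^ (k+1) = 5 * ∑ k ∈ Finset.range M, q (k+1) * 5 ^ k := by
      rw [Finset.mul_sum]; apply Finset.sum_congr rfl; intro i _; ring
    simp only [pow_zero, mul_one] at hsum
    rw [h1, h2] at hsum
    have hp0 := hp 0
    have hq0 := hq 0
    have heq : p 0 = q 0 ∧ (∑ k ∈ Finset.range M, p (k+1) * 5 ^ k) = ∑ k ∈ Finset.range M, q (k+1) * 5 ^ k := by
      constructor <;> omega
    rcases k with _ | k
    · exact heq.1
    · exact ih (fun k => p (k+1)) (fun k => q (k+1)) (fun k => hp _) (fun k => hq _) heq.2 k (by omega)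

def ind5 (a k : ℕ) : ℕ := if k = a ∧ 0 < k then 1 else 0

def gn5 (k : ℕ) : ℕ := if k = 0 then 0 else 5 ^ k

lemma ind5_le (a k : ℕ) : ind5 a k ≤ 1 := by unfold ind5; split <;> omega

lemma ind5_self {a : ℕ} (ha : 0 < a) : ind5 a a = 1 := by simp [ind5, ha]

lemma ind5_ne {a k : ℕ} (h : k ≠ a) : ind5 a k = 0 := by simp [ind5, h]

lemma ind5_pos {a k : ℕ} (h : 0 < ind5 a k) : k = a ∧ 0 < k := by
  by_contra hc; rw [ind5, if_neg hc] at h; omega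

lemma gn5_sum {M a : ℕ} (ha : a < M) : ∑ k ∈ Finset.range M, ind5 a k * 5 ^ k = gn5 a := by
  rcases Nat.eq_zero_or_pos a with h0 | h0
  · subst h0
    rw [Finset.sum_eq_zero, gn5]
    · simp
    · intro k _
      rcases Nat.eq_zero_or_pos k with hk | hk
      · subst hk; simp [ind5]
      · rw [ind5_ne (by omega), zero_mul]
  · rw [Finset.sum_eq_single a]
    · rw [ind5_self h0, one_mul, gn5, if_neg (by omega)]
    · intro k _ hk; rw [ind5_ne hk, zero_mul]
    · intro h; exact absurd (Finset.mem_range.2 ha) h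

lemma pair_eq {P1 P2 Q1 Q2 : ℕ} (hP : P1 ≤ P2) (hQ : Q1 ≤ Q2)
    (h : ∀ k, ind5 P1 k + ind5 P2 k = ind5 Q1 k + ind5 Q2 k) : P1 = Q1 ∧ P2 = Q2 := by
  have key : ∀ A1 A2 B1 B2 : ℕ, A1 ≤ A2 → B1 ≤ B2 →
      (∀ k, ind5 A1 k + ind5 A2 k = ind5 B1 k + ind5 B2 k) → A2 ≤ B2 := by
    intro A1 A2 B1 B2 hA hB hh
    rcases Nat.eq_zero_or_pos A2 with h0 | h0
    · omega
    · have := hh A2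
      rw [ind5_self h0] at this
      have h1 : 0 < ind5 B1 A2 ∨ 0 < ind5 B2 A2 := by omega
      rcases h1 with h1 | h1
      · rcases ind5_pos h1 with ⟨rfl, _⟩; omega
      · rcases ind5_pos h1 with ⟨rfl, _⟩; omega
  have h2 : P2 = Q2 := le_antisymm (key _ _ _ _ hP hQ h)
    (key _ _ _ _ hQ hP (fun k => (h k).symm))
  subst h2
  have h' : ∀ k, ind5 P1 k = ind5 Q1 k := fun k => by have := h k; omega
  have key2 : ∀ A B : ℕ, (∀ k, ind5 A k = ind5 B k) → A ≤ B := by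
    intro A B hh
    rcases Nat.eq_zero_or_pos A with h0 | h0
    · omega
    · have := hh A
      rw [ind5_self h0] at this
      rcases ind5_pos (by omega : 0 < ind5 B A) with ⟨rfl, _⟩; omega
  exact ⟨le_antisymm (key2 _ _ h') (key2 _ _ (fun k => (h' k).symm)), rfl⟩

def gval (t : ℕ × ℕ × ℕ × ℕ) : ℤ :=
  (gn5 t.1 : ℤ) + gn5 t.2.1 - gn5 t.2.2.1 - gn5 t.2.2.2

def Canon (n : ℕ) (t : ℕ × ℕ × ℕ × ℕ) : Prop :=
  t.1 ≤ t.2.1 ∧ t.2.1 ≤ n ∧ t.2.2.1 ≤ t.2.2.2 ∧ t.2.2.2 ≤ n ∧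
  ∀ k, 0 < k → (k = t.1 ∨ k = t.2.1) → k ≠ t.2.2.1 ∧ k ≠ t.2.2.2

lemma canon_inj {n : ℕ} {t t' : ℕ × ℕ × ℕ × ℕ} (ht : Canon n t) (ht' : Canon n t')
    (hv : gval t = gval t') : t = t' := by
  obtain ⟨P1, P2, N1, N2⟩ := t
  obtain ⟨Q1, Q2, M1, M2⟩ := t'
  obtain ⟨hP12, hP2n, hN12, hN2n, hdis⟩ := ht
  obtain ⟨hQ12, hQ2n, hM12, hM2n, hdis'⟩ := ht'
  simp only [gval] at hv
  simp only [Canon] at *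
  have hnat : gn5 P1 + gn5 P2 + gn5 M1 + gn5 M2 = gn5 Q1 + gn5 Q2 + gn5 N1 + gn5 N2 := by
    have : (↑(gn5 P1 + gn5 P2 + gn5 M1 + gn5 M2) : ℤ) = ↑(gn5 Q1 + gn5 Q2 + gn5 N1 + gn5 N2) := by
      push_cast; linarith
    exact_mod_cast this
  -- digit functions
  set p : ℕ → ℕ := fun k => ind5 P1 k + ind5 P2 k + ind5 M1 k + ind5 M2 k with hp
  set q : ℕ → ℕ := fun k => ind5 Q1 k + ind5 Q2 k + ind5 N1 k + ind5 N2 k with hq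
  have hsum : ∀ (a b c d : ℕ), a ≤ n → b ≤ n → c ≤ n → d ≤ n →
      ∑ k ∈ Finset.range (n+1), (ind5 a k + ind5 b k + ind5 c k + ind5 d k) * 5 ^ k
        = gn5 a + gn5 b + gn5 c + gn5 d := by
    intro a b c d ha hb hc hd
    have : ∀ k, (ind5 a k + ind5 b k + ind5 c k + ind5 d k) * 5 ^ k
        = ind5 a k * 5 ^ k + ind5 b k * 5 ^ k + ind5 c k * 5 ^ k + ind5 d k * 5 ^ k := by
      intro k; ring
    simp only [this]
    rw [Finset.sum_add_distrib, Finset.sum_add_distrib, Finset.sum_add_distrib,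
      gn5_sum (by omega), gn5_sum (by omega), gn5_sum (by omega), gn5_sum (by omega)]
  have hdig : ∀ k < n + 1, p k = q k := by
    apply digits5
    · intro k; have := ind5_le P1 k; have := ind5_le P2 k; have := ind5_le M1 k;
        have := ind5_le M2 k; simp only [hp]; omega
    · intro k; have := ind5_le Q1 k; have := ind5_le Q2 k; have := ind5_le N1 k;
        have := ind5_le N2 k; simp only [hq]; omega
    · rw [hp, hq, hsum _ _ _ _ (by omega) hP2n (by omega) hM2n,
        hsum _ _ _ _ (by omega) hQ2n (by omega) hN2n, hnat]
  have hall : ∀ k, ind5 P1 k + ind5 P2 k + ind5 M1 k + ind5 M2 k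
      = ind5 Q1 k + ind5 Q2 k + ind5 N1 k + ind5 N2 k := by
    intro k
    by_cases hk : k < n + 1
    · exact hdig k hk
    · rw [ind5_ne (by omega), ind5_ne (by omega), ind5_ne (by omega), ind5_ne (by omega),
        ind5_ne (by omega), ind5_ne (by omega), ind5_ne (by omega), ind5_ne (by omega)]
  -- disjointness at each k
  have hdisP : ∀ k, ind5 P1 k + ind5 P2 k = 0 ∨ ind5 N1 k + ind5 N2 k = 0 := by
    intro k
    by_cases h : 0 < ind5 P1 k + ind5 P2 k
    · right
      have hk : (k = P1 ∨ k = P2) ∧ 0 < k := by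
        rcases Nat.lt_or_ge 0 (ind5 P1 k) with h1 | h1
        · obtain ⟨e, hpos⟩ := ind5_pos h1; exact ⟨Or.inl e, hpos⟩
        · obtain ⟨e, hpos⟩ := ind5_pos (by omega : 0 < ind5 P2 k); exact ⟨Or.inr e, hpos⟩
      obtain ⟨hne1, hne2⟩ := hdis k hk.2 hk.1
      rw [ind5_ne hne1, ind5_ne hne2]
    · left; omega
  have hdisQ : ∀ k, ind5 Q1 k + ind5 Q2 k = 0 ∨ ind5 M1 k + ind5 M2 k = 0 := by
    intro k
    by_cases h : 0 < ind5 Q1 k + ind5 Q2 k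
    · right
      have hk : (k = Q1 ∨ k = Q2) ∧ 0 < k := by
        rcases Nat.lt_or_ge 0 (ind5 Q1 k) with h1 | h1
        · obtain ⟨e, hpos⟩ := ind5_pos h1; exact ⟨Or.inl e, hpos⟩
        · obtain ⟨e, hpos⟩ := ind5_pos (by omega : 0 < ind5 Q2 k); exact ⟨Or.inr e, hpos⟩
      obtain ⟨hne1, hne2⟩ := hdis' k hk.2 hk.1
      rw [ind5_ne hne1, ind5_ne hne2]
    · left; omega
  have hPeq : ∀ k, ind5 P1 k + ind5 P2 k = ind5 Q1 k + ind5 Q2 k := by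
    intro k; have := hall k; have := hdisP k; have := hdisQ k; omega
  have hNeq : ∀ k, ind5 N1 k + ind5 N2 k = ind5 M1 k + ind5 M2 k := by
    intro k; have := hall k; have := hdisP k; have := hdisQ k; omega
  obtain ⟨e1, e2⟩ := pair_eq hP12 hQ12 hPeq
  obtain ⟨e3, e4⟩ := pair_eq hN12 hM12 hNeq
  simp [e1, e2, e3, e4]

def pairsLT (t : Finset ℕ) : Finset (ℕ × ℕ) := (t ×ˢ t).filter fun p => p.1 < p.2

lemma mem_pairsLT {t : Finset ℕ} {p : ℕ × ℕ} :
    p ∈ pairsLT t ↔ p.1 ∈ t ∧ p.2 ∈ t ∧ p.1 < p.2 := by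
  simp only [pairsLT, Finset.mem_filter, Finset.mem_product]; tauto

lemma two_mul_card_pairsLT (t : Finset ℕ) :
    2 * (pairsLT t).card = t.card * (t.card - 1) := by
  classical
  have hswap : ((t ×ˢ t).filter fun p => p.2 < p.1) = (pairsLT t).image Prod.swap := by
    ext ⟨x, y⟩
    simp only [Finset.mem_filter, Finset.mem_product, Finset.mem_image, mem_pairsLT,
      Prod.ext_iff]
    constructor
    · rintro ⟨⟨hx, hy⟩, h⟩; exact ⟨(y, x), ⟨hy, hx, h⟩, rfl, rfl⟩
    · rintro ⟨⟨a, b⟩, ⟨ha, hb, h⟩, rfl, rfl⟩; exact ⟨⟨hb, ha⟩, h⟩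
  have hcard : ((t ×ˢ t).filter fun p => p.2 < p.1).card = (pairsLT t).card := by
    rw [hswap, Finset.card_image_of_injective _ Prod.swap_injective]
  have hunion : t.offDiag = pairsLT t ∪ (t ×ˢ t).filter fun p => p.2 < p.1 := by
    ext ⟨x, y⟩
    simp only [Finset.mem_offDiag, Finset.mem_union, Finset.mem_filter, Finset.mem_product,
      mem_pairsLT]
    constructor
    · rintro ⟨hx, hy, hne⟩
      rcases Nat.lt_or_ge x y with h | h
      · exact Or.inl ⟨hx, hy, h⟩
      · exact Or.inr ⟨⟨hx, hy⟩, by omega⟩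
    · rintro (⟨hx, hy, h⟩ | ⟨⟨hx, hy⟩, h⟩) <;> exact ⟨hx, hy, by omega⟩
  have hdisj : Disjoint (pairsLT t) ((t ×ˢ t).filter fun p => p.2 < p.1) := by
    rw [Finset.disjoint_left]
    rintro ⟨x, y⟩ h1 h2
    rw [mem_pairsLT] at h1
    simp only [Finset.mem_filter] at h2
    omega
  have hoff := Finset.offDiag_card t
  rw [hunion, Finset.card_union_of_disjoint hdisj, hcard] at hoff
  rcases Nat.eq_zero_or_pos t.card with h | h
  · have : pairsLT t = ∅ := by
      rw [Finset.card_eq_zero] at h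
      simp [pairsLT, h, Finset.filter_empty]
    simp [this, h]
  · obtain ⟨m, hm⟩ : ∃ m, t.card = m + 1 := ⟨t.card - 1, by omega⟩
    rw [hm] at hoff ⊢
    have : (m + 1) * (m + 1) - (m + 1) = (m + 1) * m := by
      have : (m + 1) * (m + 1) = (m + 1) * m + (m + 1) := by ring
      omega
    simp only [Nat.add_sub_cancel]
    omega

def sI (n : ℕ) : Finset ℕ := Finset.Icc 1 n

lemma mem_sI {n x : ℕ} : x ∈ sI n ↔ 1 ≤ x ∧ x ≤ n := Finset.mem_Icc

def C0 : Finset (ℕ × ℕ × ℕ × ℕ) := {(0, 0, 0, 0)}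
def C1 (n : ℕ) : Finset (ℕ × ℕ × ℕ × ℕ) := (sI n).offDiag.image fun p => (0, p.1, 0, p.2)
def C2 (n : ℕ) : Finset (ℕ × ℕ × ℕ × ℕ) := (sI n).offDiag.image fun p => (p.1, p.1, p.2, p.2)
def C3 (n : ℕ) : Finset (ℕ × ℕ × ℕ × ℕ) :=
  (pairsLT (sI n)).biUnion fun p => (sI n \ {p.1, p.2}).image fun x => (x, x, p.1, p.2)
def C4 (n : ℕ) : Finset (ℕ × ℕ × ℕ × ℕ) :=
  (pairsLT (sI n)).biUnion fun p => (sI n \ {p.1, p.2}).image fun y => (p.1, p.2, y, y)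
def C5 (n : ℕ) : Finset (ℕ × ℕ × ℕ × ℕ) :=
  (pairsLT (sI n)).biUnion fun p =>
    (pairsLT (sI n \ {p.1, p.2})).image fun q => (p.1, p.2, q.1, q.2)
def CC (n : ℕ) : Finset (ℕ × ℕ × ℕ × ℕ) := ((((C0 ∪ C1 n) ∪ C2 n) ∪ C3 n) ∪ C4 n) ∪ C5 n

lemma card_sdiff_pair {n x y : ℕ} (hx : x ∈ sI n) (hy : y ∈ sI n) (hxy : x ≠ y) :
    (sI n \ {x, y}).card = n - 2 := by
  rw [Finset.card_sdiff_of_subset (by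
    intro z hz
    simp only [Finset.mem_insert, Finset.mem_singleton] at hz
    rcases hz with rfl | rfl <;> assumption)]
  rw [Finset.card_insert_of_notMem (by simp [hxy]), Finset.card_singleton]
  simp [sI]

lemma card_C0 : C0.card = 1 := rfl

lemma card_C1 (n : ℕ) : (C1 n).card = n * n - n := by
  rw [C1, Finset.card_image_of_injective _ (by intro a b h; simpa [Prod.ext_iff] using h),
    Finset.offDiag_card]
  simp [sI]

lemma card_C2 (n : ℕ) : (C2 n).card = n * n - n := by
  rw [C2, Finset.card_image_of_injective _ (by intro a b h; simpa [Prod.ext_iff] using h),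
    Finset.offDiag_card]
  simp [sI]

lemma card_C3 (n : ℕ) : (C3 n).card = (pairsLT (sI n)).card * (n - 2) := by
  rw [C3, Finset.card_biUnion (by
    rintro ⟨a, b⟩ _ ⟨c, d⟩ _ hne
    rw [Function.onFun, Finset.disjoint_left]
    rintro t ht ht'
    simp only [Finset.mem_image] at ht ht'
    obtain ⟨x, _, rfl⟩ := ht
    obtain ⟨y, _, he⟩ := ht'
    simp only [ne_eq, Prod.mk.injEq, Prod.ext_iff] at he hne
    tauto)]
  rw [Finset.sum_congr rfl (fun p hp => ?_), Finset.sum_const, smul_eq_mul]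
  rw [mem_pairsLT] at hp
  rw [Finset.card_image_of_injective _ (by intro a b h; simpa [Prod.ext_iff] using h),
    card_sdiff_pair hp.1 hp.2.1 (by omega)]

lemma card_C4 (n : ℕ) : (C4 n).card = (pairsLT (sI n)).card * (n - 2) := by
  rw [C4, Finset.card_biUnion (by
    rintro ⟨a, b⟩ _ ⟨c, d⟩ _ hne
    rw [Function.onFun, Finset.disjoint_left]
    rintro t ht ht'
    simp only [Finset.mem_image] at ht ht'
    obtain ⟨x, _, rfl⟩ := ht
    obtain ⟨y, _, he⟩ := ht'
    simp only [ne_eq, Prod.mk.injEq, Prod.ext_iff] at he hne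
    tauto)]
  rw [Finset.sum_congr rfl (fun p hp => ?_), Finset.sum_const, smul_eq_mul]
  rw [mem_pairsLT] at hp
  rw [Finset.card_image_of_injective _ (by intro a b h; simpa [Prod.ext_iff] using h),
    card_sdiff_pair hp.1 hp.2.1 (by omega)]

lemma card_C5 (n : ℕ) : (C5 n).card = (pairsLT (sI n)).card * ((n - 2) * (n - 3) / 2) := by
  rw [C5, Finset.card_biUnion (by
    rintro ⟨a, b⟩ _ ⟨c, d⟩ _ hne
    rw [Function.onFun, Finset.disjoint_left]
    rintro t ht ht'
    simp only [Finset.mem_image] at ht ht'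
    obtain ⟨x, _, rfl⟩ := ht
    obtain ⟨y, _, he⟩ := ht'
    simp only [ne_eq, Prod.mk.injEq, Prod.ext_iff] at he hne
    tauto)]
  rw [Finset.sum_congr rfl (fun p hp => ?_), Finset.sum_const, smul_eq_mul]
  rw [mem_pairsLT] at hp
  rw [Finset.card_image_of_injective _ (by intro a b h; simpa [Prod.ext_iff] using h)]
  have h2 := two_mul_card_pairsLT (sI n \ {p.1, p.2})
  rw [card_sdiff_pair hp.1 hp.2.1 (by omega), show n - 2 - 1 = n - 3 by omega] at h2
  omega

-- shape lemmas
lemma shape_C0 {n : ℕ} {t : ℕ × ℕ × ℕ × ℕ} (h : t ∈ C0) :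
    t.1 = 0 ∧ t.2.1 = 0 := by
  simp only [C0, Finset.mem_singleton] at h; subst h; exact ⟨rfl, rfl⟩

lemma shape_C1 {n : ℕ} {t : ℕ × ℕ × ℕ × ℕ} (h : t ∈ C1 n) :
    t.1 = 0 ∧ 0 < t.2.1 := by
  simp only [C1, Finset.mem_image, Finset.mem_offDiag, mem_sI] at h
  obtain ⟨p, hp, rfl⟩ := h
  exact ⟨rfl, show 0 < p.1 by omega⟩

lemma shape_C2 {n : ℕ} {t : ℕ × ℕ × ℕ × ℕ} (h : t ∈ C2 n) :
    0 < t.1 ∧ t.1 = t.2.1 ∧ t.2.2.1 = t.2.2.2 := by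
  simp only [C2, Finset.mem_image, Finset.mem_offDiag, mem_sI] at h
  obtain ⟨p, hp, rfl⟩ := h
  exact ⟨show 0 < p.1 by omega, rfl, rfl⟩

lemma shape_C3 {n : ℕ} {t : ℕ × ℕ × ℕ × ℕ} (h : t ∈ C3 n) :
    0 < t.1 ∧ t.1 = t.2.1 ∧ t.2.2.1 < t.2.2.2 := by
  simp only [C3, Finset.mem_biUnion, Finset.mem_image] at h
  obtain ⟨p, hp, x, hx, rfl⟩ := h
  rw [mem_pairsLT] at hp
  simp only [Finset.mem_sdiff, mem_sI] at hx
  exact ⟨show 0 < x by omega, rfl, show p.1 < p.2 from hp.2.2⟩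

lemma shape_C4 {n : ℕ} {t : ℕ × ℕ × ℕ × ℕ} (h : t ∈ C4 n) :
    0 < t.1 ∧ t.1 < t.2.1 ∧ t.2.2.1 = t.2.2.2 := by
  simp only [C4, Finset.mem_biUnion, Finset.mem_image] at h
  obtain ⟨p, hp, y, hy, rfl⟩ := h
  rw [mem_pairsLT] at hp
  have h1 : 1 ≤ p.1 ∧ p.1 ≤ n := mem_sI.1 hp.1
  exact ⟨show 0 < p.1 by omega, show p.1 < p.2 from hp.2.2, rfl⟩

lemma shape_C5 {n : ℕ} {t : ℕ × ℕ × ℕ × ℕ} (h : t ∈ C5 n) :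
    0 < t.1 ∧ t.1 < t.2.1 ∧ t.2.2.1 < t.2.2.2 := by
  simp only [C5, Finset.mem_biUnion, Finset.mem_image] at h
  obtain ⟨p, hp, q, hq, rfl⟩ := h
  rw [mem_pairsLT] at hp hq
  have h1 : 1 ≤ p.1 ∧ p.1 ≤ n := mem_sI.1 hp.1
  exact ⟨show 0 < p.1 by omega, show p.1 < p.2 from hp.2.2, show q.1 < q.2 from hq.2.2⟩

lemma card_CC (n : ℕ) (hn : 3 ≤ n) : (CC n).card = fBound n := by
  classical
  have d01 : Disjoint C0 (C1 n) := Finset.disjoint_left.2 fun t h h' =>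
    by have := shape_C0 (n := n) h; have := shape_C1 h'; omega
  have d02 : Disjoint C0 (C2 n) := Finset.disjoint_left.2 fun t h h' =>
    by have := shape_C0 (n := n) h; have := shape_C2 h'; omega
  have d03 : Disjoint C0 (C3 n) := Finset.disjoint_left.2 fun t h h' =>
    by have := shape_C0 (n := n) h; have := shape_C3 h'; omega
  have d04 : Disjoint C0 (C4 n) := Finset.disjoint_left.2 fun t h h' =>
    by have := shape_C0 (n := n) h; have := shape_C4 h'; omega
  have d05 : Disjoint C0 (C5 n) := Finset.disjoint_left.2 fun t h h' =>
    by have := shape_C0 (n := n) h; have := shape_C5 h'; omega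
  have d12 : Disjoint (C1 n) (C2 n) := Finset.disjoint_left.2 fun t h h' =>
    by have := shape_C1 h; have := shape_C2 h'; omega
  have d13 : Disjoint (C1 n) (C3 n) := Finset.disjoint_left.2 fun t h h' =>
    by have := shape_C1 h; have := shape_C3 h'; omega
  have d14 : Disjoint (C1 n) (C4 n) := Finset.disjoint_left.2 fun t h h' =>
    by have := shape_C1 h; have := shape_C4 h'; omega
  have d15 : Disjoint (C1 n) (C5 n) := Finset.disjoint_left.2 fun t h h' =>
    by have := shape_C1 h; have := shape_C5 h'; omega
  have d23 : Disjoint (C2 n) (C3 n) := Finset.disjoint_left.2 fun t h h' =>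
    by have := shape_C2 h; have := shape_C3 h'; omega
  have d24 : Disjoint (C2 n) (C4 n) := Finset.disjoint_left.2 fun t h h' =>
    by have := shape_C2 h; have := shape_C4 h'; omega
  have d25 : Disjoint (C2 n) (C5 n) := Finset.disjoint_left.2 fun t h h' =>
    by have := shape_C2 h; have := shape_C5 h'; omega
  have d34 : Disjoint (C3 n) (C4 n) := Finset.disjoint_left.2 fun t h h' =>
    by have := shape_C3 h; have := shape_C4 h'; omega
  have d35 : Disjoint (C3 n) (C5 n) := Finset.disjoint_left.2 fun t h h' =>
    by have := shape_C3 h; have := shape_C5 h'; omega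
  have d45 : Disjoint (C4 n) (C5 n) := Finset.disjoint_left.2 fun t h h' =>
    by have := shape_C4 h; have := shape_C5 h'; omega
  rw [CC, Finset.card_union_of_disjoint (by
      simp only [Finset.disjoint_union_left]; exact ⟨⟨⟨⟨d05, d15⟩, d25⟩, d35⟩, d45⟩),
    Finset.card_union_of_disjoint (by
      simp only [Finset.disjoint_union_left]; exact ⟨⟨⟨d04, d14⟩, d24⟩, d34⟩),
    Finset.card_union_of_disjoint (by
      simp only [Finset.disjoint_union_left]; exact ⟨⟨d03, d13⟩, d23⟩),
    Finset.card_union_of_disjoint (by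
      simp only [Finset.disjoint_union_left]; exact ⟨d02, d12⟩),
    Finset.card_union_of_disjoint d01,
    card_C0, card_C1, card_C2, card_C3, card_C4, card_C5]
  -- arithmetic
  set k := (pairsLT (sI n)).card with hk
  have h2k : 2 * k = n * (n - 1) := by
    have := two_mul_card_pairsLT (sI n)
    rwa [show (sI n).card = n by simp [sI]] at this
  have heven : 2 * ((n - 2) * (n - 3) / 2) = (n - 2) * (n - 3) := by
    rcases Nat.even_or_odd n with ⟨m, hm⟩ | ⟨m, hm⟩
    · have : (n - 2) * (n - 3) = 2 * ((m - 1) * (n - 3)) := by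
        subst hm; rw [show m + m - 2 = 2 * (m - 1) by omega]; ring
      omega
    · have : (n - 2) * (n - 3) = 2 * ((n - 2) * (m - 1)) := by
        subst hm; rw [show 2 * m + 1 - 3 = 2 * (m - 1) by omega]; ring
      omega
  set m := (n - 2) * (n - 3) / 2 with hm
  have hterm2 : 2 * (k * (n - 2)) = n * (n - 1) * (n - 2) := by
    calc 2 * (k * (n - 2)) = 2 * k * (n - 2) := by ring
    _ = n * (n - 1) * (n - 2) := by rw [h2k]
  have hterm5 : k * m = n * (n - 1) * (n - 2) * (n - 3) / 4 := by
    have h4 : n * (n - 1) * (n - 2) * (n - 3) = 4 * (k * m) := by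
      calc n * (n - 1) * (n - 2) * (n - 3) = (n * (n - 1)) * ((n - 2) * (n - 3)) := by ring
      _ = (2 * k) * (2 * m) := by rw [h2k, heven]
      _ = 4 * (k * m) := by ring
    rw [h4, Nat.mul_div_cancel_left _ (by norm_num)]
  rw [fBound, ← hterm5, ← hterm2]
  have hnn : n * n - n = n * (n - 1) := by
    rcases Nat.exists_eq_add_of_le hn with ⟨j, hj⟩
    subst hj
    rw [show 3 + j - 1 = 2 + j by omega]
    ring_nf
    omega
  rw [hnn]
  omega

lemma gn5_zero : (gn5 0 : ℤ) = 0 := by simp [gn5]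
lemma gn5_pos {x : ℕ} (hx : 0 < x) : (gn5 x : ℤ) = 5 ^ x := by
  rw [gn5, if_neg (by omega)]; push_cast; ring

-- membership intro lemmas
lemma mem_CC_C0 {n : ℕ} : ((0,0,0,0) : ℕ×ℕ×ℕ×ℕ) ∈ CC n := by
  simp [CC, C0]

lemma mem_CC_C1 {n x y : ℕ} (hx : 1 ≤ x) (hxn : x ≤ n) (hy : 1 ≤ y) (hyn : y ≤ n)
    (hxy : x ≠ y) : ((0,x,0,y) : ℕ×ℕ×ℕ×ℕ) ∈ CC n := by
  simp only [CC, Finset.mem_union]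
  refine Or.inl (Or.inl (Or.inl (Or.inl (Or.inr ?_))))
  simp only [C1, Finset.mem_image, Finset.mem_offDiag, mem_sI]
  exact ⟨(x, y), ⟨⟨hx, hxn⟩, ⟨hy, hyn⟩, hxy⟩, rfl⟩

lemma mem_CC_C2 {n x y : ℕ} (hx : 1 ≤ x) (hxn : x ≤ n) (hy : 1 ≤ y) (hyn : y ≤ n)
    (hxy : x ≠ y) : ((x,x,y,y) : ℕ×ℕ×ℕ×ℕ) ∈ CC n := by
  simp only [CC, Finset.mem_union]
  refine Or.inl (Or.inl (Or.inl (Or.inr ?_)))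
  simp only [C2, Finset.mem_image, Finset.mem_offDiag, mem_sI]
  exact ⟨(x, y), ⟨⟨hx, hxn⟩, ⟨hy, hyn⟩, hxy⟩, rfl⟩

lemma mem_CC_C3 {n x y z : ℕ} (hx : 1 ≤ x) (hxn : x ≤ n) (hy : 1 ≤ y) (hyn : y ≤ n)
    (hz : 1 ≤ z) (hzn : z ≤ n) (hyz : y < z) (hxy : x ≠ y) (hxz : x ≠ z) :
    ((x,x,y,z) : ℕ×ℕ×ℕ×ℕ) ∈ CC n := by
  simp only [CC, Finset.mem_union]
  refine Or.inl (Or.inl (Or.inr ?_))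
  simp only [C3, Finset.mem_biUnion, Finset.mem_image]
  refine ⟨(y, z), mem_pairsLT.2 ⟨mem_sI.2 ⟨hy, hyn⟩, mem_sI.2 ⟨hz, hzn⟩, hyz⟩, x, ?_, rfl⟩
  simp only [Finset.mem_sdiff, mem_sI, Finset.mem_insert, Finset.mem_singleton]
  exact ⟨⟨hx, hxn⟩, by tauto⟩

lemma mem_CC_C4 {n w x y : ℕ} (hw : 1 ≤ w) (hwn : w ≤ n) (hx : 1 ≤ x) (hxn : x ≤ n)
    (hy : 1 ≤ y) (hyn : y ≤ n) (hwx : w < x) (hyw : y ≠ w) (hyx : y ≠ x) :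
    ((w,x,y,y) : ℕ×ℕ×ℕ×ℕ) ∈ CC n := by
  simp only [CC, Finset.mem_union]
  refine Or.inl (Or.inr ?_)
  simp only [C4, Finset.mem_biUnion, Finset.mem_image]
  refine ⟨(w, x), mem_pairsLT.2 ⟨mem_sI.2 ⟨hw, hwn⟩, mem_sI.2 ⟨hx, hxn⟩, hwx⟩, y, ?_, rfl⟩
  simp only [Finset.mem_sdiff, mem_sI, Finset.mem_insert, Finset.mem_singleton]
  exact ⟨⟨hy, hyn⟩, by tauto⟩

lemma mem_CC_C5 {n w x y z : ℕ} (hw : 1 ≤ w) (hwn : w ≤ n) (hx : 1 ≤ x) (hxn : x ≤ n)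
    (hy : 1 ≤ y) (hyn : y ≤ n) (hz : 1 ≤ z) (hzn : z ≤ n) (hwx : w < x) (hyz : y < z)
    (hyw : y ≠ w) (hyx : y ≠ x) (hzw : z ≠ w) (hzx : z ≠ x) :
    ((w,x,y,z) : ℕ×ℕ×ℕ×ℕ) ∈ CC n := by
  simp only [CC, Finset.mem_union]
  refine Or.inr ?_
  simp only [C5, Finset.mem_biUnion, Finset.mem_image]
  refine ⟨(w, x), mem_pairsLT.2 ⟨mem_sI.2 ⟨hw, hwn⟩, mem_sI.2 ⟨hx, hxn⟩, hwx⟩, (y, z),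
    mem_pairsLT.2 ⟨?_, ?_, hyz⟩, rfl⟩ <;>
  · simp only [Finset.mem_sdiff, mem_sI, Finset.mem_insert, Finset.mem_singleton]
    constructor
    · omega
    · tauto

lemma CC_canon {n : ℕ} {t : ℕ × ℕ × ℕ × ℕ} (h : t ∈ CC n) : Canon n t := by
  simp only [CC, Finset.mem_union] at h
  rcases h with ((((h | h) | h) | h) | h) | h
  · simp only [C0, Finset.mem_singleton] at h
    subst h
    simp only [Canon]
    exact ⟨by omega, by omega, by omega, by omega, fun k hk hor => by omega⟩
  · simp only [C1, Finset.mem_image, Finset.mem_offDiag, mem_sI] at h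
    obtain ⟨⟨x, y⟩, ⟨hx, hy, hxy⟩, rfl⟩ := h
    simp only [Canon]
    exact ⟨by omega, by omega, by omega, by omega, fun k hk hor => by omega⟩
  · simp only [C2, Finset.mem_image, Finset.mem_offDiag, mem_sI] at h
    obtain ⟨⟨x, y⟩, ⟨hx, hy, hxy⟩, rfl⟩ := h
    simp only [Canon]
    exact ⟨by omega, by omega, by omega, by omega, fun k hk hor => by omega⟩
  · simp only [C3, Finset.mem_biUnion, Finset.mem_image] at h
    obtain ⟨⟨y, z⟩, hp, x, hx, rfl⟩ := h
    rw [mem_pairsLT] at hp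
    obtain ⟨hy, hz, hyz⟩ := hp
    rw [mem_sI] at hy hz
    simp only [Finset.mem_sdiff, mem_sI, Finset.mem_insert, Finset.mem_singleton] at hx
    simp only [Canon]
    exact ⟨by omega, by omega, by omega, by omega, fun k hk hor => by omega⟩
  · simp only [C4, Finset.mem_biUnion, Finset.mem_image] at h
    obtain ⟨⟨w, x⟩, hp, y, hy, rfl⟩ := h
    rw [mem_pairsLT] at hp
    obtain ⟨hw, hx, hwx⟩ := hp
    rw [mem_sI] at hw hx
    simp only [Finset.mem_sdiff, mem_sI, Finset.mem_insert, Finset.mem_singleton] at hy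
    simp only [Canon]
    exact ⟨by omega, by omega, by omega, by omega, fun k hk hor => by omega⟩
  · simp only [C5, Finset.mem_biUnion, Finset.mem_image] at h
    obtain ⟨⟨w, x⟩, hp, ⟨y, z⟩, hq, rfl⟩ := h
    rw [mem_pairsLT] at hp hq
    obtain ⟨hw, hx, hwx⟩ := hp
    obtain ⟨hy, hz, hyz⟩ := hq
    rw [mem_sI] at hw hx
    simp only [Finset.mem_sdiff, mem_sI, Finset.mem_insert, Finset.mem_singleton] at hy hz
    simp only [Canon]
    exact ⟨by omega, by omega, by omega, by omega, fun k hk hor => by omega⟩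

lemma gval_C0 : gval (0,0,0,0) = 0 := by simp [gval, gn5_zero]

lemma gval_C1 {x y : ℕ} (hx : 0 < x) (hy : 0 < y) :
    gval (0,x,0,y) = (5:ℤ)^x - 5^y := by
  simp only [gval, gn5_zero, gn5_pos hx, gn5_pos hy]; ring

lemma gval_pos {w x y z : ℕ} (hw : 0 < w) (hx : 0 < x) (hy : 0 < y) (hz : 0 < z) :
    gval (w,x,y,z) = (5:ℤ)^w + 5^x - 5^y - 5^z := by
  simp only [gval, gn5_pos hw, gn5_pos hx, gn5_pos hy, gn5_pos hz]

lemma CC_cover {n a b c d : ℕ} (ha : 1 ≤ a) (han : a ≤ n) (hb : 1 ≤ b) (hbn : b ≤ n)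
    (hc : 1 ≤ c) (hcn : c ≤ n) (hd : 1 ≤ d) (hdn : d ≤ n) :
    ∃ t ∈ CC n, gval t = (5:ℤ)^a - 5^b - 5^c + 5^d := by
  by_cases hab : a = b
  · by_cases hdc : d = c
    · exact ⟨_, mem_CC_C0, by rw [gval_C0]; subst hab hdc; ring⟩
    · exact ⟨_, mem_CC_C1 hd hdn hc hcn hdc, by
        rw [gval_C1 hd hc]; subst hab; ring⟩
  · by_cases hac : a = c
    · by_cases hdb : d = b
      · exact ⟨_, mem_CC_C0, by rw [gval_C0]; subst hac hdb; ring⟩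
      · exact ⟨_, mem_CC_C1 hd hdn hb hbn hdb, by
          rw [gval_C1 hd hb]; subst hac; ring⟩
    · by_cases hdb : d = b
      · exact ⟨_, mem_CC_C1 ha han hc hcn hac, by
          rw [gval_C1 ha hc]; subst hdb; ring⟩
      · by_cases hdc : d = c
        · exact ⟨_, mem_CC_C1 ha han hb hbn hab, by
            rw [gval_C1 ha hb]; subst hdc; ring⟩
        · by_cases had : a = d
          · by_cases hbc : b = c
            · exact ⟨_, mem_CC_C2 ha han hb hbn hab, by
                rw [gval_pos ha ha hb hb]; subst had hbc; ring⟩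
            · rcases Nat.lt_or_ge b c with h | h
              · exact ⟨_, mem_CC_C3 ha han hb hbn hc hcn h hab hac, by
                  rw [gval_pos ha ha hb hc]; subst had; ring⟩
              · have h : c < b := by omega
                exact ⟨_, mem_CC_C3 ha han hc hcn hb hbn h hac hab, by
                  rw [gval_pos ha ha hc hb]; subst had; ring⟩
          · by_cases hbc : b = c
            · rcases Nat.lt_or_ge a d with h | h
              · exact ⟨_, mem_CC_C4 ha han hd hdn hb hbn h (fun e => hab e.symm)
                  (fun e => hdb e.symm), by rw [gval_pos ha hd hb hb]; subst hbc; ring⟩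
              · have h : d < a := by omega
                exact ⟨_, mem_CC_C4 hd hdn ha han hb hbn h (fun e => hdb e.symm)
                  (fun e => hab e.symm), by rw [gval_pos hd ha hb hb]; subst hbc; ring⟩
            · rcases Nat.lt_or_ge a d with h1 | h1
              · rcases Nat.lt_or_ge b c with h2 | h2
                · exact ⟨_, mem_CC_C5 ha han hd hdn hb hbn hc hcn h1 h2
                    (fun e => hab e.symm) (fun e => hdb e.symm)
                    (fun e => hac e.symm) (fun e => hdc e.symm), by
                    rw [gval_pos ha hd hb hc]; ring⟩
                · have h2 : c < b := by omega
                  exact ⟨_, mem_CC_C5 ha han hd hdn hc hcn hb hbn h1 h2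
                    (fun e => hac e.symm) (fun e => hdc e.symm)
                    (fun e => hab e.symm) (fun e => hdb e.symm), by
                    rw [gval_pos ha hd hc hb]; ring⟩
              · have h1 : d < a := by omega
                rcases Nat.lt_or_ge b c with h2 | h2
                · exact ⟨_, mem_CC_C5 hd hdn ha han hb hbn hc hcn h1 h2
                    (fun e => hdb e.symm) (fun e => hab e.symm)
                    (fun e => hdc e.symm) (fun e => hac e.symm), by
                    rw [gval_pos hd ha hb hc]; ring⟩
                · have h2 : c < b := by omega
                  exact ⟨_, mem_CC_C5 hd hdn ha han hc hcn hb hbn h1 h2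
                    (fun e => hdc e.symm) (fun e => hac e.symm)
                    (fun e => hdb e.symm) (fun e => hab e.symm), by
                    rw [gval_pos hd ha hc hb]; ring⟩

lemma CC_realize {n : ℕ} (hn : 1 ≤ n) {t : ℕ × ℕ × ℕ × ℕ} (h : t ∈ CC n) :
    ∃ a b c d : ℕ, 1 ≤ a ∧ a ≤ n ∧ 1 ≤ b ∧ b ≤ n ∧ 1 ≤ c ∧ c ≤ n ∧ 1 ≤ d ∧ d ≤ n ∧
      (5:ℤ)^a - 5^b - 5^c + 5^d = gval t := by
  simp only [CC, Finset.mem_union] at h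
  rcases h with ((((h | h) | h) | h) | h) | h
  · simp only [C0, Finset.mem_singleton] at h
    subst h
    exact ⟨1, 1, 1, 1, le_refl _, hn, le_refl _, hn, le_refl _, hn, le_refl _, hn, by
      rw [gval_C0]; ring⟩
  · simp only [C1, Finset.mem_image, Finset.mem_offDiag, mem_sI] at h
    obtain ⟨⟨x, y⟩, ⟨hx, hy, hxy⟩, rfl⟩ := h
    exact ⟨x, y, 1, 1, hx.1, hx.2, hy.1, hy.2, le_refl _, hn, le_refl _, hn, by
      rw [gval_C1 (by omega) (by omega)]; ring⟩
  · simp only [C2, Finset.mem_image, Finset.mem_offDiag, mem_sI] at h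
    obtain ⟨⟨x, y⟩, ⟨hx, hy, hxy⟩, rfl⟩ := h
    exact ⟨x, y, y, x, hx.1, hx.2, hy.1, hy.2, hy.1, hy.2, hx.1, hx.2, by
      rw [gval_pos (by omega) (by omega) (by omega) (by omega)]; ring⟩
  · simp only [C3, Finset.mem_biUnion, Finset.mem_image] at h
    obtain ⟨⟨y, z⟩, hp, x, hx, rfl⟩ := h
    rw [mem_pairsLT] at hp
    obtain ⟨hy, hz, hyz⟩ := hp
    rw [mem_sI] at hy hz
    simp only [Finset.mem_sdiff, mem_sI, Finset.mem_insert, Finset.mem_singleton] at hx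
    exact ⟨x, y, z, x, hx.1.1, hx.1.2, hy.1, hy.2, hz.1, hz.2, hx.1.1, hx.1.2, by
      rw [gval_pos (by omega) (by omega) (by omega) (by omega)]; ring⟩
  · simp only [C4, Finset.mem_biUnion, Finset.mem_image] at h
    obtain ⟨⟨w, x⟩, hp, y, hy, rfl⟩ := h
    rw [mem_pairsLT] at hp
    obtain ⟨hw, hx, hwx⟩ := hp
    rw [mem_sI] at hw hx
    simp only [Finset.mem_sdiff, mem_sI, Finset.mem_insert, Finset.mem_singleton] at hy
    exact ⟨w, y, y, x, hw.1, hw.2, hy.1.1, hy.1.2, hy.1.1, hy.1.2, hx.1, hx.2, by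
      rw [gval_pos (by omega) (by omega) (by omega) (by omega)]; ring⟩
  · simp only [C5, Finset.mem_biUnion, Finset.mem_image] at h
    obtain ⟨⟨w, x⟩, hp, ⟨y, z⟩, hq, rfl⟩ := h
    rw [mem_pairsLT] at hp hq
    obtain ⟨hw, hx, hwx⟩ := hp
    obtain ⟨hy, hz, hyz⟩ := hq
    rw [mem_sI] at hw hx
    simp only [Finset.mem_sdiff, mem_sI, Finset.mem_insert, Finset.mem_singleton] at hy hz
    exact ⟨w, y, z, x, hw.1, hw.2, hy.1.1, hy.1.2, hz.1.1, hz.1.2, hx.1, hx.2, by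
      rw [gval_pos (by omega) (by omega) (by omega) (by omega)]; ring⟩


noncomputable def vZ (q : ℕ × ℕ × ℕ × ℕ) : ℤ :=
  (5:ℤ)^q.1 - 5^q.2.1 - 5^q.2.2.1 + 5^q.2.2.2

lemma card_image_vZ (n : ℕ) (hn : 3 ≤ n) :
    ((sI n ×ˢ sI n ×ˢ sI n ×ˢ sI n).image vZ).card = fBound n := by
  have himg : (sI n ×ˢ sI n ×ˢ sI n ×ˢ sI n).image vZ = (CC n).image gval := by
    ext v
    simp only [Finset.mem_image]
    constructor
    · rintro ⟨⟨a, b, c, d⟩, hq, rfl⟩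
      simp only [Finset.mem_product, mem_sI] at hq
      obtain ⟨⟨h1, h2⟩, ⟨h3, h4⟩, ⟨h5, h6⟩, h7, h8⟩ := hq
      obtain ⟨t, ht, he⟩ := CC_cover h1 h2 h3 h4 h5 h6 h7 h8
      exact ⟨t, ht, by rw [he]; rfl⟩
    · rintro ⟨t, ht, rfl⟩
      obtain ⟨a, b, c, d, h1, h2, h3, h4, h5, h6, h7, h8, he⟩ :=
        CC_realize (by omega) ht
      refine ⟨(a, b, c, d), ?_, ?_⟩
      · simp only [Finset.mem_product, mem_sI]
        exact ⟨⟨h1, h2⟩, ⟨h3, h4⟩, ⟨h5, h6⟩, h7, h8⟩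
      · rw [← he]; rfl
  rw [himg, Finset.card_image_of_injOn
    (fun t ht t' ht' h => canon_inj (CC_canon ht) (CC_canon ht') h), card_CC n hn]

lemma exp_int_injective : Function.Injective (fun m : ℤ => Complex.exp (m : ℂ)) := by
  intro m m' h
  simp only at h
  rw [show ((m : ℂ)) = ((m : ℝ) : ℂ) by push_cast; ring,
    show ((m' : ℂ)) = ((m' : ℝ) : ℂ) by push_cast; ring,
    ← Complex.ofReal_exp, ← Complex.ofReal_exp, Complex.ofReal_inj] at h
  have := Real.exp_injective h
  exact_mod_cast this

lemma exp_pow_injective : Function.Injective (fun i : ℕ => Complex.exp ((5:ℂ) ^ i)) := by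
  intro i j h
  simp only at h
  rw [show ((5:ℂ) ^ i) = (((5:ℕ) ^ i : ℕ) : ℝ) by push_cast; ring,
    show ((5:ℂ) ^ j) = (((5:ℕ) ^ j : ℕ) : ℝ) by push_cast; ring,
    ← Complex.ofReal_exp, ← Complex.ofReal_exp, Complex.ofReal_inj] at h
  have h2 := Real.exp_injective h
  have h3 : (5:ℕ) ^ i = 5 ^ j := by exact_mod_cast h2
  exact Nat.pow_right_injective (by norm_num) h3

/-- For every `n ≥ 3` there is a finite subset `S ⊆ ℂˣ` with `|S| = n`
and `|δ²S| = f(n)`; for instance `S = {e^{5^i} : i = 1, …, n}` works. -/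
theorem exists_delta_sq_eq (n : ℕ) (hn : 3 ≤ n) :
    ∃ S : Finset ℂˣ,
      (∀ u : ℂˣ, u ∈ S ↔ ∃ i : ℕ, 1 ≤ i ∧ i ≤ n ∧ (u : ℂ) = Complex.exp ((5 : ℂ) ^ i)) ∧
      S.card = n ∧ (((S / S) / (S / S)) : Finset ℂˣ).card = fBound n := by
  classical
  set eu : ℕ → ℂˣ := fun i => Units.mk0 (Complex.exp ((5:ℂ) ^ i)) (Complex.exp_ne_zero _)
    with heu
  set S : Finset ℂˣ := (sI n).image eu with hS
  refine ⟨S, ?_, ?_, ?_⟩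
  · intro u
    constructor
    · intro hu
      rw [hS, Finset.mem_image] at hu
      obtain ⟨i, hi, rfl⟩ := hu
      rw [sI, Finset.mem_Icc] at hi
      exact ⟨i, hi.1, hi.2, rfl⟩
    · rintro ⟨i, hi1, hi2, hval⟩
      rw [hS, Finset.mem_image]
      refine ⟨i, by rw [sI, Finset.mem_Icc]; exact ⟨hi1, hi2⟩, ?_⟩
      exact Units.ext hval.symm
  · rw [hS, Finset.card_image_of_injective _ (fun i j h => exp_pow_injective (by
      simpa [heu, Units.ext_iff] using h))]
    simp [sI]
  · -- move to ℂ
    have hinj : Function.Injective (Units.coeHom ℂ) := fun a b h => Units.ext h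
    rw [← Finset.card_image_of_injective ((S / S) / (S / S)) hinj,
      Finset.image_div, Finset.image_div]
    set S' : Finset ℂ := (sI n).image (fun i => Complex.exp ((5:ℂ) ^ i)) with hS'
    have hSim : S.image (Units.coeHom ℂ) = S' := by
      rw [hS, Finset.image_image, hS']
      rfl
    rw [hSim]
    have hmain : ((S' / S') / (S' / S') : Finset ℂ)
        = ((sI n ×ˢ sI n ×ˢ sI n ×ˢ sI n).image vZ).image
            (fun m : ℤ => Complex.exp (m : ℂ)) := by
      ext z
      constructor
      · intro hz
        rw [Finset.mem_div] at hz
        obtain ⟨u, hu, v, hv, rfl⟩ := hz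
        rw [Finset.mem_div] at hu hv
        obtain ⟨x1, hx1, x2, hx2, rfl⟩ := hu
        obtain ⟨x3, hx3, x4, hx4, rfl⟩ := hv
        rw [hS', Finset.mem_image] at hx1 hx2 hx3 hx4
        obtain ⟨i, hi, rfl⟩ := hx1
        obtain ⟨j, hj, rfl⟩ := hx2
        obtain ⟨k, hk, rfl⟩ := hx3
        obtain ⟨l, hl, rfl⟩ := hx4
        rw [Finset.mem_image]
        refine ⟨vZ (i, j, k, l), Finset.mem_image.2 ⟨(i, j, k, l), ?_, rfl⟩, ?_⟩
        · simp only [Finset.mem_product]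
          exact ⟨hi, hj, hk, hl⟩
        · rw [← Complex.exp_sub, ← Complex.exp_sub, ← Complex.exp_sub]
          congr 1
          rw [vZ]
          push_cast
          ring
      · intro hz
        rw [Finset.mem_image] at hz
        obtain ⟨m, hm, rfl⟩ := hz
        rw [Finset.mem_image] at hm
        obtain ⟨⟨i, j, k, l⟩, hq, rfl⟩ := hm
        simp only [Finset.mem_product] at hq
        obtain ⟨hi, hj, hk, hl⟩ := hq
        rw [Finset.mem_div]
        refine ⟨Complex.exp ((5:ℂ)^i) / Complex.exp ((5:ℂ)^j), ?_,
          Complex.exp ((5:ℂ)^k) / Complex.exp ((5:ℂ)^l), ?_, ?_⟩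
        · rw [Finset.mem_div]
          exact ⟨_, Finset.mem_image.2 ⟨i, hi, rfl⟩, _, Finset.mem_image.2 ⟨j, hj, rfl⟩, rfl⟩
        · rw [Finset.mem_div]
          exact ⟨_, Finset.mem_image.2 ⟨k, hk, rfl⟩, _, Finset.mem_image.2 ⟨l, hl, rfl⟩, rfl⟩
        · rw [← Complex.exp_sub, ← Complex.exp_sub, ← Complex.exp_sub]
          congr 1
          rw [vZ]
          push_cast
          ring
    rw [hmain, Finset.card_image_of_injective _ exp_int_injective]
    exact card_image_vZ n hn
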